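/- arXiv:math/0104058 — 4 statements merged into one kernel-verified Lean document; each statement's English description precedes it below -/
import Mathlib

section
/- Let $x$, $y$, $n$ be nonnegative integers with $x+y>0$ and $n\ge 1$. Let $K_n(x,y)$ be the $n\times n$ matrix with rational entries $K_{i,j}=\frac{(x+y+i+j-1)!}{(x+2i-j)!\,(y+2j-i)!}$ for $1\le i,j\le n$, where an entry is interpreted as $0$ whenever $x+2i-j<0$ or $y+2j-i<0$. Then $\det K_n(x,y)=\prod_{j=1}^{n}\frac{(j-1)!\,(x+y+j)!\,(2x+y+2j+1)_{j-1}\,(x+2y+2j+1)_{j-1}}{(x+2j-1)!\,(y+2j-1)!}$. -/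
/-- Factorial of an integer assumed nonnegative (via `Int.toNat`). -/
def ifact (m : ℤ) : ℚ := (m.toNat.factorial : ℚ)

/-- Reciprocal of the factorial of an integer, with the convention
`1/m! = 0` for negative integers `m`. -/
def invfact (m : ℤ) : ℚ := if m < 0 then 0 else 1 / (m.toNat.factorial : ℚ)

/-- The shifted factorial (Pochhammer symbol) `(a)_k = a(a+1)⋯(a+k-1)`. -/
def poch (a : ℤ) (k : ℕ) : ℤ := ∏ i ∈ Finset.range k, (a + i)

namespace DetK


lemma ifact_succ (m : ℤ) (h : 0 ≤ m) : ifact (m+1) = (m+1) * ifact m := by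
  unfold ifact
  have h1 : (m+1).toNat = m.toNat + 1 := by omega
  have hm : ((m.toNat : ℚ)) = (m:ℚ) := by exact_mod_cast congrArg (fun z : ℤ => (z:ℚ)) (Int.toNat_of_nonneg h)
  rw [h1, Nat.factorial_succ]
  push_cast [hm]
  ring

lemma ifact_pos (m : ℤ) : 0 < ifact m := by
  unfold ifact; positivity

lemma invfact_neg {m : ℤ} (h : m < 0) : invfact m = 0 := by simp [invfact, h]

lemma invfact_pos {m : ℤ} (h : 0 ≤ m) : 0 < invfact m := by
  rw [invfact, if_neg (by omega)]; positivity

lemma invfact_succ (m : ℤ) (h : 0 ≤ m) : invfact m = (m+1) * invfact (m+1) := by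
  unfold invfact
  rw [if_neg (by omega), if_neg (by omega)]
  have h1 : (m+1).toNat = m.toNat + 1 := by omega
  have hm : ((m.toNat : ℚ)) = (m:ℚ) := by exact_mod_cast congrArg (fun z : ℤ => (z:ℚ)) (Int.toNat_of_nonneg h)
  rw [h1, Nat.factorial_succ]
  push_cast [hm]
  have hp : ((m.toNat.factorial : ℚ)) ≠ 0 := by positivity
  have hq : (m:ℚ) + 1 ≠ 0 := by
    have : (0:ℚ) ≤ (m:ℚ) := by exact_mod_cast h
    linarith
  field_simp

lemma ifact_mul_invfact (m : ℤ) (h : 0 ≤ m) : ifact m * invfact m = 1 := by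
  rw [ifact, invfact, if_neg (by omega)]
  have : ((m.toNat.factorial : ℚ)) ≠ 0 := by positivity
  field_simp

lemma poch_succ (a : ℤ) (k : ℕ) : poch a (k+1) = a * poch (a+1) k := by
  unfold poch
  rw [Finset.prod_range_succ']
  rw [Finset.prod_congr rfl (fun i (_ : i ∈ Finset.range k) => (by push_cast; ring : a + ((i+1 : ℕ) : ℤ) = (a+1) + (i:ℤ)))]
  push_cast
  ring

lemma poch_pos (a : ℤ) (k : ℕ) (h : 0 < a) : 0 < poch a k := by
  unfold poch
  exact Finset.prod_pos fun i _ => by positivity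

lemma ifact_natCast (k : ℕ) : ifact (k : ℤ) = (k.factorial : ℚ) := by
  simp [ifact]

lemma invfact_natCast (k : ℕ) : invfact (k : ℤ) = 1 / (k.factorial : ℚ) := by
  simp [invfact]


noncomputable def Tm (x y : ℤ) (j : ℕ) : ℚ :=
  (Nat.factorial j : ℚ) * ifact (x + y + j + 1) * (poch (2*x + y + 2*j + 3) j : ℚ)
    * (poch (x + 2*y + 2*j + 3) j : ℚ) * invfact (x + 2*j + 1) * invfact (y + 2*j + 1)

noncomputable def Pq (n : ℕ) (x y : ℤ) : ℚ := ∏ j ∈ Finset.range n, Tm x y j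

set_option maxHeartbeats 1000000 in
lemma L1 (x y : ℤ) (j : ℕ) (hx : 0 ≤ x) (hy : 0 ≤ y) :
    Tm (x+2) (y-1) j * Tm (x-1) (y+2) j
      * (((x+y+j+3) * ((x+2*j+3) * (y+2*j+3)) : ℤ) : ℚ)
    = Tm (x+1) (y+1) j * Tm x y j
      * (((x+y+j+2) * ((x+2*j+1) * (y+2*j+1)) : ℤ) : ℚ) := by
  have sA : ∀ a : ℤ, a = x+y+(j:ℤ)+2 → 0 ≤ x+y+(j:ℤ)+1 →
      ifact a = ((x:ℚ)+y+j+2) * ifact (x+y+(j:ℤ)+1) := by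
    rintro a rfl h
    rw [show x+y+(j:ℤ)+2 = (x+y+(j:ℤ)+1)+1 from by ring, ifact_succ _ h]
    push_cast; ring
  have sIx : ∀ a : ℤ, a = x+2*(j:ℤ)+2 →
      invfact a = ((x:ℚ)+2*j+3) * invfact (x+2*(j:ℤ)+3) := by
    rintro a rfl
    rw [invfact_succ (x+2*(j:ℤ)+2) (by omega)]; push_cast; ring
  have sIy : ∀ a : ℤ, a = y+2*(j:ℤ)+2 →
      invfact a = ((y:ℚ)+2*j+3) * invfact (y+2*(j:ℤ)+3) := by
    rintro a rfl
    rw [invfact_succ (y+2*(j:ℤ)+2) (by omega)]; push_cast; ring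
  unfold Tm
  rw [show ifact (x+2+(y-1)+(j:ℤ)+1) = ((x:ℚ)+y+j+2) * ifact (x+y+(j:ℤ)+1) from
        sA _ (by ring) (by omega),
      show ifact (x-1+(y+2)+(j:ℤ)+1) = ((x:ℚ)+y+j+2) * ifact (x+y+(j:ℤ)+1) from
        sA _ (by ring) (by omega),
      show ifact (x+1+(y+1)+(j:ℤ)+1) = ((x:ℚ)+y+j+3)*((x:ℚ)+y+j+2) * ifact (x+y+(j:ℤ)+1) from by
        rw [show x+1+(y+1)+(j:ℤ)+1 = (x+y+(j:ℤ)+2)+1 from by ring, ifact_succ _ (by omega),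
          sA _ rfl (by omega)]; push_cast; ring,
      show invfact (x+2+2*(j:ℤ)+1) = invfact (x+2*(j:ℤ)+3) from by norm_num; ring_nf,
      show invfact (y-1+2*(j:ℤ)+1) =
          ((y:ℚ)+2*j+1)*((y:ℚ)+2*j+2)*((y:ℚ)+2*j+3) * invfact (y+2*(j:ℤ)+3) from by
        rw [show y-1+2*(j:ℤ)+1 = y+2*(j:ℤ) from by ring, invfact_succ (y+2*(j:ℤ)) (by omega),
          invfact_succ (y+2*(j:ℤ)+1) (by omega), sIy _ (by ring)]; push_cast; ring,
      show invfact (x-1+2*(j:ℤ)+1) =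
          ((x:ℚ)+2*j+1)*((x:ℚ)+2*j+2)*((x:ℚ)+2*j+3) * invfact (x+2*(j:ℤ)+3) from by
        rw [show x-1+2*(j:ℤ)+1 = x+2*(j:ℤ) from by ring, invfact_succ (x+2*(j:ℤ)) (by omega),
          invfact_succ (x+2*(j:ℤ)+1) (by omega), sIx _ (by ring)]; push_cast; ring,
      show invfact (y+2+2*(j:ℤ)+1) = invfact (y+2*(j:ℤ)+3) from by norm_num; ring_nf,
      show invfact (x+1+2*(j:ℤ)+1) = ((x:ℚ)+2*j+3) * invfact (x+2*(j:ℤ)+3) from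
        sIx _ (by ring),
      show invfact (y+1+2*(j:ℤ)+1) = ((y:ℚ)+2*j+3) * invfact (y+2*(j:ℤ)+3) from
        sIy _ (by ring),
      show invfact (x+2*(j:ℤ)+1) =
          ((x:ℚ)+2*j+2)*((x:ℚ)+2*j+3) * invfact (x+2*(j:ℤ)+3) from by
        rw [invfact_succ (x+2*(j:ℤ)+1) (by omega), sIx _ (by ring)]; push_cast; ring,
      show invfact (y+2*(j:ℤ)+1) =
          ((y:ℚ)+2*j+2)*((y:ℚ)+2*j+3) * invfact (y+2*(j:ℤ)+3) from by
        rw [invfact_succ (y+2*(j:ℤ)+1) (by omega), sIy _ (by ring)]; push_cast; ring,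
      show poch (2*(x+2)+(y-1)+2*(j:ℤ)+3) j = poch (2*x+y+2*(j:ℤ)+6) j from by ring_nf,
      show poch (x+2+2*(y-1)+2*(j:ℤ)+3) j = poch (x+2*y+2*(j:ℤ)+3) j from by ring_nf,
      show poch (2*(x-1)+(y+2)+2*(j:ℤ)+3) j = poch (2*x+y+2*(j:ℤ)+3) j from by ring_nf,
      show poch (x-1+2*(y+2)+2*(j:ℤ)+3) j = poch (x+2*y+2*(j:ℤ)+6) j from by ring_nf,
      show poch (2*(x+1)+(y+1)+2*(j:ℤ)+3) j = poch (2*x+y+2*(j:ℤ)+6) j from by ring_nf,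
      show poch (x+1+2*(y+1)+2*(j:ℤ)+3) j = poch (x+2*y+2*(j:ℤ)+6) j from by ring_nf]
  push_cast
  generalize ((x:ℚ) + ↑y + ↑j + 2) = A1
  generalize ((x:ℚ) + ↑y + ↑j + 3) = A2
  generalize ((x:ℚ) + 2*↑j + 1) = B1
  generalize ((x:ℚ) + 2*↑j + 2) = B2
  generalize ((x:ℚ) + 2*↑j + 3) = B3
  generalize ((y:ℚ) + 2*↑j + 1) = C1
  generalize ((y:ℚ) + 2*↑j + 2) = C2
  generalize ((y:ℚ) + 2*↑j + 3) = C3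
  ring


lemma Pq_succ (n : ℕ) (x y : ℤ) : Pq (n+1) x y = Pq n x y * Tm x y n :=
  Finset.prod_range_succ _ _

lemma Tm_pos (x y : ℤ) (j : ℕ) (h1 : -1 ≤ x) (h2 : -1 ≤ y) (h3 : 0 ≤ x + y) :
    0 < Tm x y j := by
  unfold Tm
  refine mul_pos (mul_pos (mul_pos (mul_pos (mul_pos ?_ ?_) ?_) ?_) ?_) ?_
  · exact_mod_cast Nat.factorial_pos j
  · exact ifact_pos _
  · exact_mod_cast poch_pos _ _ (by omega)
  · exact_mod_cast poch_pos _ _ (by omega)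
  · exact invfact_pos (by omega)
  · exact invfact_pos (by omega)

lemma Pq_pos (n : ℕ) (x y : ℤ) (h1 : -1 ≤ x) (h2 : -1 ≤ y) (h3 : 0 ≤ x + y) :
    0 < Pq n x y :=
  Finset.prod_pos fun j _ => Tm_pos x y j h1 h2 h3

lemma Tm_zero_left (x y : ℤ) (hx : x ≤ -2) : Tm x y 0 = 0 := by
  unfold Tm
  rw [invfact_neg (show x + 2*((0:ℕ):ℤ) + 1 < 0 by push_cast; omega)]
  ring

lemma Tm_zero_right (x y : ℤ) (hy : y ≤ -2) : Tm x y 0 = 0 := by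
  unfold Tm
  rw [invfact_neg (show y + 2*((0:ℕ):ℤ) + 1 < 0 by push_cast; omega)]
  ring

lemma Pq_zero_left (n : ℕ) (x y : ℤ) (hx : x ≤ -2) (hn : 0 < n) : Pq n x y = 0 :=
  Finset.prod_eq_zero (Finset.mem_range.mpr hn) (Tm_zero_left x y hx)

lemma Pq_zero_right (n : ℕ) (x y : ℤ) (hy : y ≤ -2) (hn : 0 < n) : Pq n x y = 0 :=
  Finset.prod_eq_zero (Finset.mem_range.mpr hn) (Tm_zero_right x y hy)

set_option maxHeartbeats 1000000 in
lemma LB (x y : ℤ) (m : ℕ) (hx : 0 ≤ x) (hy : 0 ≤ y) :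
    Tm x y (m+1) * (((x:ℚ)+y+m+3) * (((x:ℚ)+2*m+3) * ((y:ℚ)+2*m+3)))
    = (((m:ℚ)+1) * ((2*(x:ℚ)+y+2*m+5) * ((x:ℚ)+2*y+2*m+5))) * Tm (x+1) (y+1) m := by
  unfold Tm
  rw [Nat.factorial_succ]
  push_cast
  rw [show x + y + ((m:ℤ) + 1) + 1 = x+y+(m:ℤ)+2 from by ring,
      show x+1+(y+1)+(m:ℤ)+1 = (x+y+(m:ℤ)+2)+1 from by ring,
      show ifact ((x+y+(m:ℤ)+2)+1) = ((x:ℚ)+↑y+↑m+3) * ifact (x+y+(m:ℤ)+2) from by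
        rw [ifact_succ _ (by omega)]; push_cast; ring,
      show poch (2*x+y+2*((m:ℤ)+1)+3) (m+1)
          = (2*x+y+2*(m:ℤ)+5) * poch (2*x+y+2*(m:ℤ)+6) m from by
        rw [show 2*x+y+2*((m:ℤ)+1)+3 = 2*x+y+2*(m:ℤ)+5 from by ring, poch_succ]; ring_nf,
      show poch (x+2*y+2*((m:ℤ)+1)+3) (m+1)
          = (x+2*y+2*(m:ℤ)+5) * poch (x+2*y+2*(m:ℤ)+6) m from by
        rw [show x+2*y+2*((m:ℤ)+1)+3 = x+2*y+2*(m:ℤ)+5 from by ring, poch_succ]; ring_nf,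
      show poch (2*(x+1)+(y+1)+2*(m:ℤ)+3) m = poch (2*x+y+2*(m:ℤ)+6) m from by ring_nf,
      show poch (x+1+2*(y+1)+2*(m:ℤ)+3) m = poch (x+2*y+2*(m:ℤ)+6) m from by ring_nf,
      show x+2*((m:ℤ)+1)+1 = x+2*(m:ℤ)+3 from by ring,
      show y+2*((m:ℤ)+1)+1 = y+2*(m:ℤ)+3 from by ring,
      show x+1+2*(m:ℤ)+1 = x+2*(m:ℤ)+2 from by ring,
      show y+1+2*(m:ℤ)+1 = y+2*(m:ℤ)+2 from by ring,
      show invfact (x+2*(m:ℤ)+2) = ((x:ℚ)+2*↑m+3) * invfact (x+2*(m:ℤ)+3) from by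
        rw [invfact_succ _ (by omega)]; push_cast; ring,
      show invfact (y+2*(m:ℤ)+2) = ((y:ℚ)+2*↑m+3) * invfact (y+2*(m:ℤ)+3) from by
        rw [invfact_succ _ (by omega)]; push_cast; ring]
  push_cast
  generalize ((x:ℚ) + ↑y + ↑m + 3) = A2
  generalize ((x:ℚ) + 2*↑m + 3) = B3
  generalize ((y:ℚ) + 2*↑m + 3) = C3
  generalize (2*(x:ℚ) + ↑y + 2*↑m + 5) = D1
  generalize ((x:ℚ) + 2*↑y + 2*↑m + 5) = D2
  ring

set_option maxHeartbeats 1000000 in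
lemma LC (x : ℤ) (m : ℕ) (hx : 1 ≤ x) : Tm x (-1) (m+1) = Tm (x+1) 0 m := by
  unfold Tm
  rw [Nat.factorial_succ]
  push_cast
  rw [show x + -1 + ((m:ℤ) + 1) + 1 = x+(m:ℤ)+1 from by ring,
      show x+1+0+(m:ℤ)+1 = (x+(m:ℤ)+1)+1 from by ring,
      show ifact ((x+(m:ℤ)+1)+1) = ((x:ℚ)+↑m+2) * ifact (x+(m:ℤ)+1) from by
        rw [ifact_succ _ (by omega)]; push_cast; ring,
      show poch (2*x+ -1+2*((m:ℤ)+1)+3) (m+1)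
          = (2*x+2*(m:ℤ)+4) * poch (2*x+2*(m:ℤ)+5) m from by
        rw [show 2*x+ -1+2*((m:ℤ)+1)+3 = 2*x+2*(m:ℤ)+4 from by ring, poch_succ]; ring_nf,
      show poch (x+ -2+2*((m:ℤ)+1)+3) (m+1)
          = (x+2*(m:ℤ)+3) * poch (x+2*(m:ℤ)+4) m from by
        rw [show x+ -2+2*((m:ℤ)+1)+3 = x+2*(m:ℤ)+3 from by ring, poch_succ]; ring_nf,
      show poch (2*(x+1)+0+2*(m:ℤ)+3) m = poch (2*x+2*(m:ℤ)+5) m from by ring_nf,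
      show poch (x+1+0+2*(m:ℤ)+3) m = poch (x+2*(m:ℤ)+4) m from by ring_nf,
      show x+2*((m:ℤ)+1)+1 = x+2*(m:ℤ)+3 from by ring,
      show (-1)+2*((m:ℤ)+1)+1 = 2*(m:ℤ)+2 from by ring,
      show x+1+2*(m:ℤ)+1 = x+2*(m:ℤ)+2 from by ring,
      show (0:ℤ)+2*(m:ℤ)+1 = 2*(m:ℤ)+1 from by ring,
      show invfact (x+2*(m:ℤ)+2) = ((x:ℚ)+2*↑m+3) * invfact (x+2*(m:ℤ)+3) from by
        rw [invfact_succ _ (by omega)]; push_cast; ring,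
      show invfact (2*(m:ℤ)+1) = (2*(m:ℚ)+2) * invfact (2*(m:ℤ)+2) from by
        rw [invfact_succ _ (by omega)]; push_cast; ring]
  push_cast
  ring

set_option maxHeartbeats 1000000 in
lemma LC' (y : ℤ) (m : ℕ) (hy : 1 ≤ y) : Tm (-1) y (m+1) = Tm 0 (y+1) m := by
  unfold Tm
  rw [Nat.factorial_succ]
  push_cast
  rw [show (-1) + y + ((m:ℤ) + 1) + 1 = y+(m:ℤ)+1 from by ring,
      show (0:ℤ)+(y+1)+(m:ℤ)+1 = (y+(m:ℤ)+1)+1 from by ring,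
      show ifact ((y+(m:ℤ)+1)+1) = ((y:ℚ)+↑m+2) * ifact (y+(m:ℤ)+1) from by
        rw [ifact_succ _ (by omega)]; push_cast; ring,
      show poch (-2+y+2*((m:ℤ)+1)+3) (m+1)
          = (y+2*(m:ℤ)+3) * poch (y+2*(m:ℤ)+4) m from by
        rw [show (-2)+y+2*((m:ℤ)+1)+3 = y+2*(m:ℤ)+3 from by ring, poch_succ]; ring_nf,
      show poch ((-1)+2*y+2*((m:ℤ)+1)+3) (m+1)
          = (2*y+2*(m:ℤ)+4) * poch (2*y+2*(m:ℤ)+5) m from by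
        rw [show (-1)+2*y+2*((m:ℤ)+1)+3 = 2*y+2*(m:ℤ)+4 from by ring, poch_succ]; ring_nf,
      show poch (0+(y+1)+2*(m:ℤ)+3) m = poch (y+2*(m:ℤ)+4) m from by ring_nf,
      show poch (0+2*(y+1)+2*(m:ℤ)+3) m = poch (2*y+2*(m:ℤ)+5) m from by ring_nf,
      show (-1)+2*((m:ℤ)+1)+1 = 2*(m:ℤ)+2 from by ring,
      show y+2*((m:ℤ)+1)+1 = y+2*(m:ℤ)+3 from by ring,
      show (0:ℤ)+2*(m:ℤ)+1 = 2*(m:ℤ)+1 from by ring,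
      show y+1+2*(m:ℤ)+1 = y+2*(m:ℤ)+2 from by ring,
      show invfact (2*(m:ℤ)+1) = (2*(m:ℚ)+2) * invfact (2*(m:ℤ)+2) from by
        rw [invfact_succ _ (by omega)]; push_cast; ring,
      show invfact (y+2*(m:ℤ)+2) = ((y:ℚ)+2*↑m+3) * invfact (y+2*(m:ℤ)+3) from by
        rw [invfact_succ _ (by omega)]; push_cast; ring]
  push_cast
  ring

set_option maxHeartbeats 1000000 in
lemma LA (x y : ℤ) (hx : 0 ≤ x) (hy : 0 ≤ y) : ∀ m : ℕ,
    Pq (m+1) (x+2) (y-1) * Pq (m+1) (x-1) (y+2)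
      * (((x:ℚ)+y+m+3) * (((x:ℚ)+2*m+3) * ((y:ℚ)+2*m+3)))
    = Pq (m+1) (x+1) (y+1) * Pq (m+1) x y
      * (((x:ℚ)+y+2) * (((x:ℚ)+1) * ((y:ℚ)+1))) := by
  intro m
  induction m with
  | zero =>
    have h := L1 x y 0 hx hy
    push_cast at h ⊢
    unfold Pq
    rw [Finset.prod_range_one, Finset.prod_range_one, Finset.prod_range_one,
      Finset.prod_range_one]
    linear_combination h
  | succ m IH =>
    have h := L1 x y (m+1) hx hy
    push_cast at h IH ⊢
    rw [show m+1+1 = (m+1)+1 from rfl, Pq_succ (m+1) (x+2) (y-1), Pq_succ (m+1) (x-1) (y+2),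
      Pq_succ (m+1) (x+1) (y+1), Pq_succ (m+1) x y]
    linear_combination (Pq (m+1) (x+2) (y-1) * Pq (m+1) (x-1) (y+2)) * h
      + (Tm (x+1) (y+1) (m+1) * Tm x y (m+1)) * IH

lemma star_y (x : ℤ) (hx : 1 ≤ x) (m : ℕ) :
    Pq (m+2) x (-1) * Pq m (x+1) 0
    = Pq (m+1) (x+1) 0 * Pq (m+1) x (-1)
      - Pq (m+1) (x+2) (-2) * Pq (m+1) (x-1) 1 := by
  rw [Pq_zero_right (m+1) (x+2) (-2) (by omega) (by omega),
    show m+2 = (m+1)+1 from rfl, Pq_succ (m+1) x (-1), Pq_succ m (x+1) 0, LC x m hx]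
  ring

lemma star_x (y : ℤ) (hy : 1 ≤ y) (m : ℕ) :
    Pq (m+2) (-1) y * Pq m 0 (y+1)
    = Pq (m+1) 0 (y+1) * Pq (m+1) (-1) y
      - Pq (m+1) 1 (y-1) * Pq (m+1) (-2) (y+2) := by
  rw [Pq_zero_left (m+1) (-2) (y+2) (by omega) (by omega),
    show m+2 = (m+1)+1 from rfl, Pq_succ (m+1) (-1) y, Pq_succ m 0 (y+1), LC' y m hy]
  ring

set_option maxHeartbeats 1000000 in
lemma star (x y : ℤ) (hx : -1 ≤ x) (hy : -1 ≤ y) (hxy : 0 ≤ x + y) (m : ℕ) :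
    Pq (m+2) x y * Pq m (x+1) (y+1)
    = Pq (m+1) (x+1) (y+1) * Pq (m+1) x y
      - Pq (m+1) (x+2) (y-1) * Pq (m+1) (x-1) (y+2) := by
  rcases eq_or_lt_of_le hy with hy1 | hy0
  · have hx1 : 1 ≤ x := by omega
    subst hy1
    rw [show (-1:ℤ)+1 = 0 from by norm_num, show (-1:ℤ)-1 = -2 from by norm_num,
      show (-1:ℤ)+2 = 1 from by norm_num]
    exact star_y x hx1 m
  · rcases eq_or_lt_of_le hx with hx1 | hx0
    · have hy1 : 1 ≤ y := by omega
      subst hx1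
      rw [show (-1:ℤ)+1 = 0 from by norm_num, show (-1:ℤ)-1 = -2 from by norm_num,
        show (-1:ℤ)+2 = 1 from by norm_num]
      exact star_x y hy1 m
    · have hx0' : 0 ≤ x := by omega
      have hy0' : 0 ≤ y := by omega
      have hW : (((x:ℚ)+y+m+3) * (((x:ℚ)+2*m+3) * ((y:ℚ)+2*m+3))) ≠ 0 := by
        have c1 : (0:ℚ) < (x:ℚ)+y+m+3 := by
          have : (0:ℤ) < x+y+m+3 := by omega
          exact_mod_cast this
        have c2 : (0:ℚ) < (x:ℚ)+2*m+3 := by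
          have : (0:ℤ) < x+2*m+3 := by omega
          exact_mod_cast this
        have c3 : (0:ℚ) < (y:ℚ)+2*m+3 := by
          have : (0:ℤ) < y+2*m+3 := by omega
          exact_mod_cast this
        positivity
      apply mul_right_cancel₀ hW
      have hL := LB x y m hx0' hy0'
      have hA := LA x y hx0' hy0' m
      have e1 : Pq (m+2) x y = Pq (m+1) x y * Tm x y (m+1) := Pq_succ (m+1) x y
      have e2 : Pq (m+1) (x+1) (y+1) = Pq m (x+1) (y+1) * Tm (x+1) (y+1) m :=
        Pq_succ m (x+1) (y+1)
      linear_combination (Pq m (x+1) (y+1)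
          * (((x:ℚ)+y+m+3) * (((x:ℚ)+2*m+3) * ((y:ℚ)+2*m+3)))) * e1
        + (Pq (m+1) x y * Pq m (x+1) (y+1)) * hL + hA
        - ((((m:ℚ)+1) * ((2*(x:ℚ)+y+2*m+5) * ((x:ℚ)+2*y+2*m+5))) * Pq (m+1) x y) * e2



open Matrix

def cor (n : ℕ) : Fin 2 → Fin (n+2) := fun a => if a.val = 0 then 0 else Fin.last (n+1)
def gmid (n : ℕ) : Fin n → Fin (n+2) := fun k => ⟨k+1, by omega⟩

lemma cor_zero (n : ℕ) : cor n 0 = 0 := rfl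
lemma cor_one (n : ℕ) : cor n 1 = Fin.last (n+1) := rfl

def eqA (n : ℕ) : Fin n ⊕ Fin 1 ≃ Fin (n+1) where
  toFun := Sum.elim (fun k => ⟨k+1, by omega⟩) (fun _ => 0)
  invFun i := if h : (i:ℕ) = 0 then Sum.inr 0 else Sum.inl ⟨(i:ℕ)-1, by omega⟩
  left_inv := by
    rintro (k | a)
    · dsimp only [Sum.elim_inl]
      rw [dif_neg (by simp)]
      simp
    · dsimp only [Sum.elim_inr]
      rw [dif_pos (by simp)]
      simp [Subsingleton.elim a 0]
  right_inv i := by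
    dsimp only
    by_cases h : (i:ℕ) = 0
    · rw [dif_pos h]; dsimp only [Sum.elim_inr]; exact Fin.ext (by simp [h])
    · rw [dif_neg h]; dsimp only [Sum.elim_inl]; exact Fin.ext (by simp; omega)

def eqB (n : ℕ) : Fin n ⊕ Fin 1 ≃ Fin (n+1) where
  toFun := Sum.elim (fun k => ⟨k, by omega⟩) (fun _ => Fin.last n)
  invFun i := if h : (i:ℕ) = n then Sum.inr 0 else Sum.inl ⟨(i:ℕ), by omega⟩
  left_inv := by
    rintro (k | a)
    · dsimp only [Sum.elim_inl]
      rw [dif_neg (by exact Nat.ne_of_lt k.isLt)]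
    · dsimp only [Sum.elim_inr]
      rw [dif_pos (by simp [Fin.last])]
      simp [Subsingleton.elim a 0]
  right_inv i := by
    dsimp only
    by_cases h : (i:ℕ) = n
    · rw [dif_pos h]; dsimp only [Sum.elim_inr]; exact Fin.ext (by simp [Fin.last, h])
    · rw [dif_neg h]; dsimp only [Sum.elim_inl]

def E2 (n : ℕ) : Fin n ⊕ Fin 2 ≃ Fin (n+2) where
  toFun := Sum.elim (gmid n) (cor n)
  invFun i := if h : (i:ℕ) = 0 then Sum.inr 0
    else if h2 : (i:ℕ) = n+1 then Sum.inr 1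
    else Sum.inl ⟨(i:ℕ)-1, by omega⟩
  left_inv := by
    rintro (k | a)
    · dsimp only [Sum.elim_inl, gmid]
      have hk := k.isLt
      rw [dif_neg (by simp), dif_neg (by simp; omega)]
      simp
    · rcases a with ⟨av, hav⟩
      interval_cases av
      · dsimp only [Sum.elim_inr, cor]
        norm_num
      · dsimp only [Sum.elim_inr, cor]
        norm_num [Fin.last]
  right_inv i := by
    dsimp only
    by_cases h : (i:ℕ) = 0
    · rw [dif_pos h]; dsimp only [Sum.elim_inr, cor]
      norm_num
      exact Fin.ext (by simp [h])
    · by_cases h2 : (i:ℕ) = n+1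
      · rw [dif_neg h, dif_pos h2]; dsimp only [Sum.elim_inr, cor]
        norm_num
        exact Fin.ext (by simp [Fin.last, h2])
      · rw [dif_neg h, dif_neg h2]; dsimp only [Sum.elim_inl, gmid]
        exact Fin.ext (by simp; omega)


lemma det_sub_pair (n : ℕ) (X Y : Matrix (Fin (n+1)) (Fin (n+1)) ℚ)
    (e f : Fin n ⊕ Fin 1 ≃ Fin (n+1)) :
    (X.submatrix e f).det * (Y.submatrix f e).det = X.det * Y.det := by
  have h1 : X.submatrix e f = (X.submatrix e e).submatrix id ⇑(f.trans e.symm) := by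
    ext i j; simp
  have h2 : Y.submatrix f e = (Y.submatrix f f).submatrix id ⇑((f.trans e.symm)⁻¹) := by
    ext i j
    simp [Equiv.Perm.inv_def]
  rw [h1, h2, Matrix.det_permute', Matrix.det_permute',
    Matrix.det_submatrix_equiv_self, Matrix.det_submatrix_equiv_self]
  rcases Int.units_eq_one_or (Equiv.Perm.sign (f.trans e.symm)) with h | h <;>
    rw [map_inv, h] <;> norm_num

theorem dodgson (n : ℕ) (M : Matrix (Fin (n+2)) (Fin (n+2)) ℚ)
    (hB : (M.submatrix (gmid n) (gmid n)).det ≠ 0) :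
    M.det * (M.submatrix (gmid n) (gmid n)).det
    = (M.submatrix Fin.castSucc Fin.castSucc).det * (M.submatrix Fin.succ Fin.succ).det
      - (M.submatrix Fin.succ Fin.castSucc).det * (M.submatrix Fin.castSucc Fin.succ).det := by
  set B := M.submatrix (gmid n) (gmid n) with hBdef
  haveI : Invertible B := Matrix.invertibleOfIsUnitDet B (isUnit_iff_ne_zero.2 hB)
  set C : Matrix (Fin n) (Fin 2) ℚ := Matrix.of fun k b => M (gmid n k) (cor n b) with hC
  set R : Matrix (Fin 2) (Fin n) ℚ := Matrix.of fun a k => M (cor n a) (gmid n k) with hR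
  set S : Matrix (Fin 2) (Fin 2) ℚ :=
    Matrix.of (fun a b => M (cor n a) (cor n b)) - R * ⅟B * C with hS
  have entry : ∀ (a b : Fin 2),
      (Matrix.of (fun (_ : Fin 1) k => R a k) * ⅟B
        * Matrix.of (fun k (_ : Fin 1) => C k b)) 0 0 = (R * ⅟B * C) a b := by
    intro a b
    simp [Matrix.mul_apply, Finset.sum_mul, Finset.mul_sum]
  have hM : M.det = B.det * (S 0 0 * S 1 1 - S 0 1 * S 1 0) := by
    have h1 : M.submatrix (E2 n) (E2 n)
        = Matrix.fromBlocks B C R (Matrix.of fun a b => M (cor n a) (cor n b)) := by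
      ext (k | a) (l | b) <;> rfl
    rw [← Matrix.det_submatrix_equiv_self (E2 n) M, h1, Matrix.det_fromBlocks₁₁,
      ← hS, Matrix.det_fin_two]
  -- corner minors
  have key : ∀ a b : Fin 2,
      (M.submatrix (if a.val = 0 then (Fin.castSucc : Fin (n+1) → Fin (n+2)) else Fin.succ)
        (if b.val = 0 then (Fin.castSucc : Fin (n+1) → Fin (n+2)) else Fin.succ)).submatrix
        (if a.val = 0 then eqA n else eqB n) (if b.val = 0 then eqA n else eqB n)
      = Matrix.fromBlocks B (Matrix.of fun k (_ : Fin 1) => C k b)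
          (Matrix.of fun (_ : Fin 1) k => R a k)
          (Matrix.of fun (_ : Fin 1) (_ : Fin 1) => M (cor n a) (cor n b)) := by
    intro a b
    rcases a with ⟨av, ha⟩
    rcases b with ⟨bv, hb⟩
    interval_cases av <;> interval_cases bv <;>
      · ext (k | u) (l | v) <;> rfl
  have hdet : ∀ a b : Fin 2,
      ((M.submatrix (if a.val = 0 then (Fin.castSucc : Fin (n+1) → Fin (n+2)) else Fin.succ)
        (if b.val = 0 then (Fin.castSucc : Fin (n+1) → Fin (n+2)) else Fin.succ)).submatrix
        (if a.val = 0 then eqA n else eqB n) (if b.val = 0 then eqA n else eqB n)).det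
      = B.det * S a b := by
    intro a b
    rw [key a b, Matrix.det_fromBlocks₁₁]
    congr 1
    rw [Matrix.det_fin_one]
    simp only [Matrix.sub_apply, Matrix.of_apply]
    rw [entry a b, hS]
    simp
  have h00 : (M.submatrix Fin.castSucc Fin.castSucc).det = B.det * S 0 0 := by
    have := hdet 0 0
    norm_num at this
    rw [← Matrix.submatrix_submatrix] at this
    rw [← this, Matrix.det_submatrix_equiv_self]
  have h11 : (M.submatrix Fin.succ Fin.succ).det = B.det * S 1 1 := by
    have := hdet 1 1
    norm_num at this
    rw [← Matrix.submatrix_submatrix] at this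
    rw [← this, Matrix.det_submatrix_equiv_self]
  have h10 : (M.submatrix Fin.succ Fin.castSucc).det * (M.submatrix Fin.castSucc Fin.succ).det
      = (B.det * S 1 0) * (B.det * S 0 1) := by
    have e10 := hdet 1 0
    have e01 := hdet 0 1
    norm_num at e10 e01
    rw [← Matrix.submatrix_submatrix] at e10 e01
    rw [← e10, ← e01]
    exact (det_sub_pair n _ _ (eqB n) (eqA n)).symm
  rw [hM, h00, h11]
  calc B.det * (S 0 0 * S 1 1 - S 0 1 * S 1 0) * B.det
      = B.det * S 0 0 * (B.det * S 1 1) - B.det * S 1 0 * (B.det * S 0 1) := by ring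
    _ = _ := by rw [← h10]

noncomputable def Kmat (n : ℕ) (x y : ℤ) : Matrix (Fin n) (Fin n) ℚ :=
  Matrix.of fun i j => ifact (x + y + (i.val:ℤ) + (j.val:ℤ) + 1)
    * invfact (x + 2*(i.val:ℤ) - (j.val:ℤ) + 1) * invfact (y + 2*(j.val:ℤ) - (i.val:ℤ) + 1)

lemma sub_inner (m : ℕ) (x y : ℤ) :
    (Kmat (m+2) x y).submatrix (gmid m) (gmid m) = Kmat m (x+1) (y+1) := by
  ext i j
  simp only [Kmat, Matrix.submatrix_apply, Matrix.of_apply, gmid]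
  push_cast
  ring_nf

lemma sub00 (m : ℕ) (x y : ℤ) :
    (Kmat (m+2) x y).submatrix Fin.castSucc Fin.castSucc = Kmat (m+1) x y := by
  ext i j
  simp only [Kmat, Matrix.submatrix_apply, Matrix.of_apply, Fin.coe_castSucc]

lemma sub11 (m : ℕ) (x y : ℤ) :
    (Kmat (m+2) x y).submatrix Fin.succ Fin.succ = Kmat (m+1) (x+1) (y+1) := by
  ext i j
  simp only [Kmat, Matrix.submatrix_apply, Matrix.of_apply, Fin.val_succ]
  push_cast
  ring_nf

lemma sub10 (m : ℕ) (x y : ℤ) :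
    (Kmat (m+2) x y).submatrix Fin.succ Fin.castSucc = Kmat (m+1) (x+2) (y-1) := by
  ext i j
  simp only [Kmat, Matrix.submatrix_apply, Matrix.of_apply, Fin.val_succ, Fin.coe_castSucc]
  push_cast
  ring_nf

lemma sub01 (m : ℕ) (x y : ℤ) :
    (Kmat (m+2) x y).submatrix Fin.castSucc Fin.succ = Kmat (m+1) (x-1) (y+2) := by
  ext i j
  simp only [Kmat, Matrix.submatrix_apply, Matrix.of_apply, Fin.val_succ, Fin.coe_castSucc]
  push_cast
  ring_nf

theorem G : ∀ (n : ℕ) (x y : ℤ), 0 ≤ x + y → (Kmat n x y).det = Pq n x y := by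
  intro n
  induction n using Nat.strong_induction_on with
  | _ n IH =>
    rcases n with _ | n
    · intro x y _
      simp [Matrix.det_fin_zero, Pq]
    rcases n with _ | m
    · intro x y _
      rw [Matrix.det_fin_one, Pq, Finset.prod_range_one]
      unfold Tm Kmat poch
      simp
      try ring_nf
    · intro x y hxy
      rcases le_or_gt x (-2) with hx | hx
      · have hrow : ∀ j, Kmat (m+2) x y 0 j = 0 := by
          intro j
          have h0 : (((0 : Fin (m+2)).val) : ℤ) = 0 := by simp
          simp only [Kmat, Matrix.of_apply]
          rw [invfact_neg (by rw [h0]; omega)]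
          ring
        rw [Matrix.det_eq_zero_of_row_eq_zero 0 hrow,
          Pq_zero_left (m+2) x y hx (by omega)]
      rcases le_or_gt y (-2) with hy | hy
      · have hcol : ∀ i, Kmat (m+2) x y i 0 = 0 := by
          intro i
          have h0 : (((0 : Fin (m+2)).val) : ℤ) = 0 := by simp
          simp only [Kmat, Matrix.of_apply]
          rw [invfact_neg (m := y + 2*(((0 : Fin (m+2)).val):ℤ) - (i.val:ℤ) + 1)
            (by rw [h0]; omega)]
          ring
        rw [Matrix.det_eq_zero_of_column_eq_zero 0 hcol,
          Pq_zero_right (m+2) x y hy (by omega)]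
      · have hxm : -1 ≤ x := by omega
        have hym : -1 ≤ y := by omega
        have hPq : Pq m (x+1) (y+1) ≠ 0 :=
          (Pq_pos m (x+1) (y+1) (by omega) (by omega) (by omega)).ne'
        have hDet := dodgson m (Kmat (m+2) x y) (by
          rw [sub_inner m x y, IH m (by omega) (x+1) (y+1) (by omega)]
          exact hPq)
        rw [sub_inner m x y, sub00 m x y, sub11 m x y, sub10 m x y, sub01 m x y,
          IH m (by omega) (x+1) (y+1) (by omega),
          IH (m+1) (by omega) x y (by omega),
          IH (m+1) (by omega) (x+1) (y+1) (by omega),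
          IH (m+1) (by omega) (x+2) (y-1) (by omega),
          IH (m+1) (by omega) (x-1) (y+2) (by omega)] at hDet
        have hstar := star x y hxm hym hxy m
        apply mul_right_cancel₀ hPq
        rw [hDet, hstar]
        ring

end DetK

/-- **Theorem 1.9**: the determinant evaluation for the matrix
`K_n(x,y)` with entries `(x+y+i+j-1)! / ((x+2i-j)! (y+2j-i)!)`,
an entry being `0` whenever `x+2i-j < 0` or `y+2j-i < 0`. -/
theorem det_K (n x y : ℕ) (hn : 1 ≤ n) (hxy : 0 < x + y) :
    Matrix.det (Matrix.of fun i j : Fin n =>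
      ifact ((x : ℤ) + y + ((i.val : ℤ) + 1) + ((j.val : ℤ) + 1) - 1)
        * invfact ((x : ℤ) + 2 * ((i.val : ℤ) + 1) - ((j.val : ℤ) + 1))
        * invfact ((y : ℤ) + 2 * ((j.val : ℤ) + 1) - ((i.val : ℤ) + 1)))
    = ∏ j ∈ Finset.range n,
        ((Nat.factorial j : ℚ) * (Nat.factorial (x + y + (j + 1)) : ℚ)
          * (poch (2 * (x : ℤ) + y + 2 * ((j : ℤ) + 1) + 1) j : ℚ)
          * (poch ((x : ℤ) + 2 * y + 2 * ((j : ℤ) + 1) + 1) j : ℚ))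
        / ((Nat.factorial (x + 2 * (j + 1) - 1) : ℚ)
          * (Nat.factorial (y + 2 * (j + 1) - 1) : ℚ)) := by
  have h1 : (Matrix.of fun i j : Fin n =>
      ifact ((x : ℤ) + y + ((i.val : ℤ) + 1) + ((j.val : ℤ) + 1) - 1)
        * invfact ((x : ℤ) + 2 * ((i.val : ℤ) + 1) - ((j.val : ℤ) + 1))
        * invfact ((y : ℤ) + 2 * ((j.val : ℤ) + 1) - ((i.val : ℤ) + 1)))
      = DetK.Kmat n (x:ℤ) (y:ℤ) := by
    ext i j
    simp only [Matrix.of_apply, DetK.Kmat]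
    ring_nf
  rw [h1, DetK.G n x y (by positivity)]
  apply Finset.prod_congr rfl
  intro j hj
  unfold DetK.Tm
  rw [show (x:ℤ)+(y:ℤ)+(j:ℤ)+1 = ((x+y+(j+1) : ℕ) : ℤ) from by push_cast; ring,
    show (x:ℤ)+2*(j:ℤ)+1 = ((x+2*(j+1)-1 : ℕ) : ℤ) from by
      rw [Nat.cast_sub (by omega)]; push_cast; ring,
    show (y:ℤ)+2*(j:ℤ)+1 = ((y+2*(j+1)-1 : ℕ) : ℤ) from by
      rw [Nat.cast_sub (by omega)]; push_cast; ring,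
    DetK.ifact_natCast, DetK.invfact_natCast, DetK.invfact_natCast,
    show poch (2*(x:ℤ)+(y:ℤ)+2*(j:ℤ)+3) j = poch (2*(x:ℤ)+(y:ℤ)+2*((j:ℤ)+1)+1) j from by
      ring_nf,
    show poch ((x:ℤ)+2*(y:ℤ)+2*(j:ℤ)+3) j = poch ((x:ℤ)+2*(y:ℤ)+2*((j:ℤ)+1)+1) j from by
      ring_nf]
  ring
end

section
/- Let $n$ be a positive integer and let $x$, $y$ be nonnegative integers. Let $A_n(x,y)$ be the $n\times n$ integer matrix with entries $A_{i,j}=\binom{x+y+j}{x-i+2j}-\binom{x+y+j}{x+i+2j}$ for $1\le i,j\le n$, and let $B_n(x,y)$ be the $n\times n$ integer matrix with entries $B_{i,j}=\binom{x+y+j+2n-2i+1}{x+2j+n-i+1}-\binom{x+y+j+2n-2i+1}{x+2j+n-i}$ for $1\le i,j\le n$, where in both matrices $\binom{N}{k}=0$ whenever $k<0$ or $k>N$. Then $(-1)^{n(n+1)/2}\det A_n(x,y)=\det B_n(x,y)$. -/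
/-- Binomial coefficient of integers, `0` whenever `k < 0` or `k > N`. -/
def ibin (N k : ℤ) : ℤ := if 0 ≤ k ∧ k ≤ N then (N.toNat.choose k.toNat : ℤ) else 0

lemma ibin_of_neg {N k : ℤ} (h : k < 0) : ibin N k = 0 := by
  unfold ibin; rw [if_neg]; omega

lemma ibin_of_gt {N k : ℤ} (h : N < k) : ibin N k = 0 := by
  unfold ibin; rw [if_neg]; omega

lemma ibin_zero_zero (N : ℤ) (hN : 0 ≤ N) : ibin N 0 = 1 := by
  unfold ibin; rw [if_pos ⟨le_refl _, hN⟩]; simp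

lemma ibin_self (N : ℤ) (hN : 0 ≤ N) : ibin N N = 1 := by
  unfold ibin; rw [if_pos ⟨hN, le_refl _⟩]
  simp [Nat.choose_self]

lemma ibin_symm {N : ℤ} (hN : 0 ≤ N) (k : ℤ) : ibin N k = ibin N (N - k) := by
  unfold ibin
  by_cases h : 0 ≤ k ∧ k ≤ N
  · rw [if_pos h, if_pos ⟨by omega, by omega⟩]
    rw [show (N - k).toNat = N.toNat - k.toNat by omega]
    exact_mod_cast (Nat.choose_symm (by omega : k.toNat ≤ N.toNat)).symm
  · rw [if_neg h, if_neg (by omega)]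

lemma ibin_pascal (N : ℕ) (k : ℤ) : ibin ((N : ℤ) + 1) k = ibin N (k - 1) + ibin N k := by
  rcases lt_trichotomy k 0 with h | h | h
  · rw [ibin_of_neg h, ibin_of_neg (by omega), ibin_of_neg (by omega)]; ring
  · subst h
    rw [show (0:ℤ) - 1 = -1 from by ring, ibin_zero_zero ((N:ℤ)+1) (by positivity),
      ibin_zero_zero (N:ℤ) (Int.natCast_nonneg N), ibin_of_neg (by norm_num)]
    ring
  · by_cases h2 : k ≤ (N : ℤ)
    · unfold ibin
      rw [if_pos ⟨by omega, by omega⟩, if_pos ⟨by omega, by omega⟩, if_pos ⟨by omega, by omega⟩]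
      obtain ⟨j, hj⟩ : ∃ j, k.toNat = j + 1 := ⟨k.toNat - 1, by omega⟩
      rw [show ((N : ℤ) + 1).toNat = N + 1 by omega, show (k - 1).toNat = j by omega,
        show (N : ℤ).toNat = N by omega, hj]
      push_cast [Nat.choose_succ_succ]
      ring
    · by_cases h3 : k = (N : ℤ) + 1
      · subst h3
        rw [show (N : ℤ) + 1 - 1 = N from by ring, ibin_self _ (by positivity),
          ibin_self _ (Int.natCast_nonneg N), ibin_of_gt (by omega)]
        ring
      · rw [ibin_of_gt (by omega), ibin_of_gt (by omega), ibin_of_gt (by omega)]; ring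

lemma ibin_vdm (a b : ℕ) (k c : ℤ) (s : Finset ℤ)
    (hs : ∀ u : ℤ, 0 ≤ c - u → c - u ≤ (b : ℤ) → u ∈ s) :
    ibin ((a : ℤ) + (b : ℤ)) k = ∑ u ∈ s, ibin (b : ℤ) (c - u) * ibin (a : ℤ) (k - c + u) := by
  induction b generalizing k c with
  | zero =>
    rw [Finset.sum_eq_single c]
    · push_cast
      rw [sub_self, ibin_zero_zero 0 le_rfl, show k - c + c = k from by ring]
      ring
    · intro u _ hne
      have h : c - u ≠ 0 := by omega
      rcases h.lt_or_gt with h | h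
      · rw [ibin_of_neg h]; ring
      · rw [ibin_of_gt (by exact_mod_cast h)]; ring
    · intro hc; exact absurd (hs c (by omega) (by omega)) hc
  | succ b ih =>
    have h1 := ih k c (fun u ha hb => hs u ha (by push_cast; omega))
    have h2 := ih (k - 1) (c - 1) (fun u ha hb => hs u (by omega) (by push_cast at hb ⊢; omega))
    push_cast
    rw [show (a : ℤ) + ((b : ℤ) + 1) = ((a + b : ℕ) : ℤ) + 1 from by push_cast; ring,
      ibin_pascal (a + b) k]
    push_cast
    rw [h1, h2, ← Finset.sum_add_distrib]
    apply Finset.sum_congr rfl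
    intro u _
    rw [ibin_pascal b (c - u), show c - 1 - u = c - u - 1 from by ring,
      show k - 1 - (c - 1) + u = k - c + u from by ring]
    ring

open Equiv

lemma revPerm_decompose (m : ℕ) :
    (Fin.revPerm : Equiv.Perm (Fin (m + 2))) =
      Equiv.Perm.decomposeFin.symm (Fin.last (m + 1), Fin.revPerm * finRotate (m + 1)) := by
  ext i
  refine Fin.cases ?_ (fun x => ?_) i
  · simp
  · rw [Equiv.Perm.decomposeFin_symm_apply_succ]
    simp only [Equiv.Perm.coe_mul, Function.comp_apply, Fin.revPerm_apply, finRotate_succ_apply]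
    by_cases hx : x = Fin.last m
    · subst hx
      have h0 : (Fin.last m + 1 : Fin (m + 1)) = 0 := by
        apply Fin.ext; simp [Fin.add_def]
      rw [h0]
      have h2 : ((0 : Fin (m+1)).rev).succ = Fin.last (m + 1) := by
        apply Fin.ext; simp [Fin.val_rev]
      rw [h2, Equiv.swap_apply_right]
      simp [Fin.val_rev]
    · have hlt : x.val < m := by
        have : x.val ≠ m := fun h => hx (Fin.ext (by simpa using h))
        omega
      have h1 : ((x + 1 : Fin (m+1))).val = x.val + 1 := by
        rw [Fin.val_add_one]
        simp [hx]
      rw [Equiv.swap_apply_of_ne_of_ne]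
      · simp [Fin.val_rev, Fin.val_succ, h1]
        omega
      · intro h
        have := congrArg Fin.val h
        simp [Fin.val_rev, h1] at this
      · intro h
        have := congrArg Fin.val h
        simp [Fin.val_rev, Fin.val_succ, h1, Fin.val_last] at this
        omega

lemma sign_revPerm (n : ℕ) :
    Equiv.Perm.sign (Fin.revPerm : Equiv.Perm (Fin n)) = (-1) ^ (n * (n - 1) / 2) := by
  induction n with
  | zero => simp [Subsingleton.elim (Fin.revPerm : Equiv.Perm (Fin 0)) 1]
  | succ m ih =>
    cases m with
    | zero => simp [Subsingleton.elim (Fin.revPerm : Equiv.Perm (Fin 1)) 1]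
    | succ m =>
      rw [revPerm_decompose, Equiv.Perm.decomposeFin.symm_sign, map_mul, sign_finRotate, ih,
        if_neg (by simp [Fin.ext_iff] : ¬ (Fin.last (m+1) = 0))]
      have harith : (m + 2) * (m + 2 - 1) / 2 = (m + 1) * (m + 1 - 1) / 2 + (m + 1) := by
        have h : (m + 2) * (m + 1) = (m + 1) * m + (m + 1) * 2 := by ring
        rw [show m + 2 - 1 = m + 1 from rfl, show m + 1 - 1 = m from rfl, h,
          Nat.add_mul_div_right _ _ (by norm_num : (0:ℕ) < 2)]
      rw [harith, pow_add, pow_succ]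
      simp [mul_comm, mul_assoc, mul_left_comm]

lemma sum_Icc_pos (n : ℕ) (f : ℤ → ℤ) :
    ∑ u ∈ Finset.Icc (1:ℤ) (n:ℤ), f u = ∑ s : Fin n, f ((s:ℤ)+1) := by
  rw [Fin.sum_univ_eq_sum_range (fun k => f ((k:ℤ)+1)) n]
  refine Finset.sum_nbij' (fun u : ℤ => (u-1).toNat) (fun k : ℕ => (k:ℤ)+1) ?_ ?_ ?_ ?_ ?_ <;>
    (intro a ha; simp [Finset.mem_Icc, Finset.mem_range] at *) <;>
    first
      | omega
      | (congr 1; omega)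

lemma sum_Icc_neg (n : ℕ) (f : ℤ → ℤ) :
    ∑ u ∈ Finset.Icc (-(n:ℤ)) (-1), f u = ∑ s : Fin n, f (-((s:ℤ)+1)) := by
  rw [Fin.sum_univ_eq_sum_range (fun k => f (-((k:ℤ)+1))) n]
  refine Finset.sum_nbij' (fun u : ℤ => (-u-1).toNat) (fun k : ℕ => -((k:ℤ)+1)) ?_ ?_ ?_ ?_ ?_ <;>
    (intro a ha; simp [Finset.mem_Icc, Finset.mem_range] at *) <;>
    first
      | omega
      | (congr 1; omega)

lemma entry (n x y : ℕ) (i j : Fin n) :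
    ibin ((x : ℤ) + y + ((j.val : ℤ) + 1) + 2 * (n : ℤ) - 2 * ((i.val : ℤ) + 1) + 1)
         ((x : ℤ) + 2 * ((j.val : ℤ) + 1) + (n : ℤ) - ((i.val : ℤ) + 1) + 1)
    - ibin ((x : ℤ) + y + ((j.val : ℤ) + 1) + 2 * (n : ℤ) - 2 * ((i.val : ℤ) + 1) + 1)
           ((x : ℤ) + 2 * ((j.val : ℤ) + 1) + (n : ℤ) - ((i.val : ℤ) + 1))
    = ∑ s : Fin n,
      (ibin (2 * (n : ℤ) - 2 * (i.val : ℤ) - 1) ((n : ℤ) - (i.val : ℤ) + (s.val : ℤ) + 1)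
        - ibin (2 * (n : ℤ) - 2 * (i.val : ℤ) - 1) ((n : ℤ) - (i.val : ℤ) + (s.val : ℤ))) *
      (ibin ((x : ℤ) + y + ((j.val : ℤ) + 1))
           ((x : ℤ) - ((s.val : ℤ) + 1) + 2 * ((j.val : ℤ) + 1))
       - ibin ((x : ℤ) + y + ((j.val : ℤ) + 1))
           ((x : ℤ) + ((s.val : ℤ) + 1) + 2 * ((j.val : ℤ) + 1))) := by
  have hi := i.isLt
  set i0 : ℤ := (i.val : ℤ) with hi0
  set j0 : ℤ := (j.val : ℤ) with hj0
  set N : ℕ := x + y + j.val + 1 with hN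
  set b : ℕ := 2 * (n - 1 - i.val) + 1 with hb
  have hNc : (N : ℤ) = (x : ℤ) + y + (j0 + 1) := by push_cast [hN]; ring
  have hbc : (b : ℤ) = 2 * (n : ℤ) - 2 * i0 - 1 := by
    rw [hb, hi0]; push_cast; omega
  have hC : (0 : ℤ) ≤ 2 * (n : ℤ) - 2 * i0 - 1 := by rw [hi0]; omega
  set W : Finset ℤ := Finset.Icc (-(n:ℤ) - 1) ((n:ℤ) + 1) with hW
  -- the value function
  set v : ℤ → ℤ := fun u => ibin (N : ℤ) ((x : ℤ) + 2 * (j0 + 1) + u) with hv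
  set g : ℤ → ℤ := fun u =>
    (ibin (2 * (n : ℤ) - 2 * i0 - 1) ((n : ℤ) - i0 - u)
      - ibin (2 * (n : ℤ) - 2 * i0 - 1) ((n : ℤ) - i0 - 1 - u)) * v u with hg
  have hv1 := ibin_vdm N b ((x:ℤ) + 2*(j0+1) + ((n:ℤ) - i0)) ((n:ℤ) - i0) W
    (by intro u h1 h2; rw [hW]; simp only [Finset.mem_Icc]; rw [hbc] at h2; omega)
  have hv2 := ibin_vdm N b ((x:ℤ) + 2*(j0+1) + ((n:ℤ) - i0) - 1) ((n:ℤ) - i0 - 1) W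
    (by intro u h1 h2; rw [hW]; simp only [Finset.mem_Icc]; rw [hbc] at h2; omega)
  have e1 : (x : ℤ) + y + (j0 + 1) + 2 * (n : ℤ) - 2 * (i0 + 1) + 1 = (N : ℤ) + (b : ℤ) := by
    rw [hNc, hbc]; ring
  have e2 : (x : ℤ) + 2 * (j0 + 1) + (n : ℤ) - (i0 + 1) + 1
      = (x:ℤ) + 2*(j0+1) + ((n:ℤ) - i0) := by ring
  have e3 : (x : ℤ) + 2 * (j0 + 1) + (n : ℤ) - (i0 + 1)
      = (x:ℤ) + 2*(j0+1) + ((n:ℤ) - i0) - 1 := by ring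
  rw [e1, e2, e3, hv1, hv2, ← Finset.sum_sub_distrib]
  have hstep1 : ∀ u ∈ W,
      ibin (b:ℤ) ((n:ℤ) - i0 - u) * ibin (N:ℤ) ((x:ℤ) + 2*(j0+1) + ((n:ℤ) - i0) - ((n:ℤ) - i0) + u)
      - ibin (b:ℤ) ((n:ℤ) - i0 - 1 - u) *
        ibin (N:ℤ) ((x:ℤ) + 2*(j0+1) + ((n:ℤ) - i0) - 1 - ((n:ℤ) - i0 - 1) + u)
      = g u := by
    intro u _
    rw [hg, hbc, hv]
    dsimp only
    rw [show (x:ℤ) + 2*(j0+1) + ((n:ℤ) - i0) - ((n:ℤ) - i0) + u = (x:ℤ) + 2*(j0+1) + u from by ring,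
      show (x:ℤ) + 2*(j0+1) + ((n:ℤ) - i0) - 1 - ((n:ℤ) - i0 - 1) + u = (x:ℤ) + 2*(j0+1) + u from by
        ring]
    ring
  rw [Finset.sum_congr rfl hstep1]
  -- restrict the window
  have hzero : ∀ u ∈ W, u ∉ (Finset.Icc (-(n:ℤ)) (-1) ∪ Finset.Icc (1:ℤ) (n:ℤ)) → g u = 0 := by
    intro u hu hnu
    rw [hW, Finset.mem_Icc] at hu
    simp only [Finset.mem_union, Finset.mem_Icc] at hnu
    have hcase : u = -(n:ℤ) - 1 ∨ u = 0 ∨ u = (n:ℤ) + 1 := by omega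
    rw [hg]
    dsimp only
    rcases hcase with h | h | h
    · subst h
      rw [ibin_of_gt (by omega), ibin_of_gt (by omega)]
      ring
    · subst h
      rw [ibin_symm hC ((n:ℤ) - i0 - 0),
        show 2 * (n : ℤ) - 2 * i0 - 1 - ((n:ℤ) - i0 - 0) = (n:ℤ) - i0 - 1 - 0 from by ring]
      ring
    · subst h
      rw [ibin_of_neg (by omega), ibin_of_neg (by omega)]
      ring
  have hsubset : (Finset.Icc (-(n:ℤ)) (-1) ∪ Finset.Icc (1:ℤ) (n:ℤ)) ⊆ W := by
    intro u hu
    simp only [Finset.mem_union, Finset.mem_Icc] at hu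
    rw [hW, Finset.mem_Icc]
    omega
  rw [← Finset.sum_subset hsubset hzero]
  have hdisj : Disjoint (Finset.Icc (-(n:ℤ)) (-1)) (Finset.Icc (1:ℤ) (n:ℤ)) := by
    rw [Finset.disjoint_left]
    intro u hu hu'
    simp only [Finset.mem_Icc] at hu hu'
    omega
  rw [Finset.sum_union hdisj, sum_Icc_neg n g, sum_Icc_pos n g, ← Finset.sum_add_distrib]
  apply Finset.sum_congr rfl
  intro s _
  rw [hg, hv]
  dsimp only
  rw [ibin_symm hC ((n:ℤ) - i0 - ((s.val:ℤ)+1)),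
    show 2 * (n:ℤ) - 2*i0 - 1 - ((n:ℤ) - i0 - ((s.val:ℤ)+1)) = (n:ℤ) - i0 + (s.val:ℤ) from by ring,
    ibin_symm hC ((n:ℤ) - i0 - 1 - ((s.val:ℤ)+1)),
    show 2 * (n:ℤ) - 2*i0 - 1 - ((n:ℤ) - i0 - 1 - ((s.val:ℤ)+1)) = (n:ℤ) - i0 + (s.val:ℤ) + 1
      from by ring,
    show (n:ℤ) - i0 - (-((s.val:ℤ)+1)) = (n:ℤ) - i0 + (s.val:ℤ) + 1 from by ring,
    show (n:ℤ) - i0 - 1 - (-((s.val:ℤ)+1)) = (n:ℤ) - i0 + (s.val:ℤ) from by ring,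
    show (x:ℤ) + 2*(j0+1) + -((s.val:ℤ)+1) = (x:ℤ) - ((s.val:ℤ)+1) + 2*(j0+1) from by ring,
    show (x:ℤ) + 2*(j0+1) + ((s.val:ℤ)+1) = (x:ℤ) + ((s.val:ℤ)+1) + 2*(j0+1) from by ring,
    hNc]
  ring

/-- The two determinants `det A_n(x,y)` and `det B_n(x,y)` agree up to the
sign `(-1)^(n(n+1)/2)` (non-intersecting lattice path bijection). -/
theorem detA_eq_detB (n x y : ℕ) (hn : 1 ≤ n) :
    (-1 : ℤ) ^ (n * (n + 1) / 2) *
      Matrix.det (Matrix.of fun i j : Fin n =>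
        ibin ((x : ℤ) + y + ((j.val : ℤ) + 1))
             ((x : ℤ) - ((i.val : ℤ) + 1) + 2 * ((j.val : ℤ) + 1))
        - ibin ((x : ℤ) + y + ((j.val : ℤ) + 1))
               ((x : ℤ) + ((i.val : ℤ) + 1) + 2 * ((j.val : ℤ) + 1)))
    = Matrix.det (Matrix.of fun i j : Fin n =>
        ibin ((x : ℤ) + y + ((j.val : ℤ) + 1) + 2 * (n : ℤ) - 2 * ((i.val : ℤ) + 1) + 1)
             ((x : ℤ) + 2 * ((j.val : ℤ) + 1) + (n : ℤ) - ((i.val : ℤ) + 1) + 1)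
        - ibin ((x : ℤ) + y + ((j.val : ℤ) + 1) + 2 * (n : ℤ) - 2 * ((i.val : ℤ) + 1) + 1)
               ((x : ℤ) + 2 * ((j.val : ℤ) + 1) + (n : ℤ) - ((i.val : ℤ) + 1))) := by
  classical
  set M : Matrix (Fin n) (Fin n) ℤ := Matrix.of fun i s : Fin n =>
      ibin (2 * (n : ℤ) - 2 * (i.val : ℤ) - 1) ((n : ℤ) - (i.val : ℤ) + (s.val : ℤ) + 1)
      - ibin (2 * (n : ℤ) - 2 * (i.val : ℤ) - 1) ((n : ℤ) - (i.val : ℤ) + (s.val : ℤ)) with hM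
  have hBA : (Matrix.of fun i j : Fin n =>
        ibin ((x : ℤ) + y + ((j.val : ℤ) + 1) + 2 * (n : ℤ) - 2 * ((i.val : ℤ) + 1) + 1)
             ((x : ℤ) + 2 * ((j.val : ℤ) + 1) + (n : ℤ) - ((i.val : ℤ) + 1) + 1)
        - ibin ((x : ℤ) + y + ((j.val : ℤ) + 1) + 2 * (n : ℤ) - 2 * ((i.val : ℤ) + 1) + 1)
               ((x : ℤ) + 2 * ((j.val : ℤ) + 1) + (n : ℤ) - ((i.val : ℤ) + 1)))
      = M * (Matrix.of fun i j : Fin n =>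
        ibin ((x : ℤ) + y + ((j.val : ℤ) + 1))
             ((x : ℤ) - ((i.val : ℤ) + 1) + 2 * ((j.val : ℤ) + 1))
        - ibin ((x : ℤ) + y + ((j.val : ℤ) + 1))
               ((x : ℤ) + ((i.val : ℤ) + 1) + 2 * ((j.val : ℤ) + 1))) := by
    ext i j
    rw [Matrix.mul_apply]
    simp only [Matrix.of_apply, hM]
    exact entry n x y i j
  rw [hBA, Matrix.det_mul]
  -- compute det M
  have hdiag : ∀ i : Fin n, (M.submatrix Fin.revPerm id) i i = -1 := by
    intro i
    have hi := i.isLt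
    simp only [Matrix.submatrix_apply, id_eq, Fin.revPerm_apply, hM, Matrix.of_apply, Fin.val_rev]
    rw [ibin_of_gt (by omega),
      show ((n:ℤ) - ((n - (i.val+1) : ℕ) : ℤ) + (i.val : ℤ))
        = 2 * (n:ℤ) - 2 * ((n - (i.val+1) : ℕ) : ℤ) - 1 from by omega,
      ibin_self _ (by omega)]
    ring
  have htri : (M.submatrix Fin.revPerm id).BlockTriangular OrderDual.toDual := by
    intro i j hij
    have hij' : i < j := hij
    have hi := i.isLt
    have hj := j.isLt
    have hij2 : i.val < j.val := hij'
    simp only [Matrix.submatrix_apply, id_eq, Fin.revPerm_apply, hM, Matrix.of_apply, Fin.val_rev]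
    rw [ibin_of_gt (by omega), ibin_of_gt (by omega)]
    ring
  have hlow : (M.submatrix Fin.revPerm id).det = (-1 : ℤ) ^ n := by
    rw [Matrix.det_of_lowerTriangular _ htri, Finset.prod_congr rfl (fun i _ => hdiag i),
      Finset.prod_const]
    simp
  have hsign := Matrix.det_permute (Fin.revPerm) M
  rw [sign_revPerm, hlow] at hsign
  push_cast at hsign
  obtain ⟨m, rfl⟩ : ∃ m, n = m + 1 := ⟨n - 1, by omega⟩
  have harith : (m+1) * (m+1+1) / 2 = (m+1) * (m+1-1) / 2 + (m+1) := by
    rw [show (m+1) * (m+1+1) = (m+1)*(m+1-1) + (m+1)*2 from by simp; ring,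
      Nat.add_mul_div_right _ _ (by norm_num : (0:ℕ) < 2)]
  have h2 : ((-1:ℤ) ^ ((m+1) * (m+1-1) / 2)) * ((-1:ℤ) ^ ((m+1) * (m+1-1) / 2)) = 1 := by
    rw [← pow_add, ← two_mul, pow_mul]
    norm_num
  have hMdet : M.det = (-1 : ℤ) ^ ((m+1) * (m+1+1) / 2) := by
    calc M.det = ((-1:ℤ) ^ ((m+1)*(m+1-1)/2) * (-1:ℤ) ^ ((m+1)*(m+1-1)/2)) * M.det := by
          rw [h2]; ring
      _ = (-1:ℤ) ^ ((m+1)*(m+1-1)/2) * ((-1:ℤ) ^ ((m+1)*(m+1-1)/2) * M.det) := by ring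
      _ = (-1:ℤ) ^ ((m+1)*(m+1-1)/2) * (-1:ℤ) ^ (m+1) := by rw [← hsign]
      _ = (-1:ℤ) ^ ((m+1)*(m+1-1)/2 + (m+1)) := by
          rw [pow_add (-1:ℤ) ((m+1)*(m+1-1)/2) (m+1)]
      _ = (-1:ℤ) ^ ((m+1) * (m+1+1) / 2) := by rw [harith]
  rw [hMdet]
end

section
/- Let $n\ge 1$ and $m\ge 0$ be integers, and let $l_1>l_2>\cdots>l_n$ be integers with $l_1\le m$ and $l_n\ge 1-n$. Then $\det\left(\binom{m}{l_j+i-1}\right)_{1\leq i,j\leq n}=\frac{\prod_{1\le i<j\le n}(l_i-l_j)\,\prod_{i=1}^{n}(m+i-1)!}{\prod_{i=1}^{n}(l_i+n-1)!\,\prod_{i=1}^{n}(m-l_i)!}$, where $\binom{m}{k}=0$ whenever $k<0$ or $k>m$. -/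
open Finset Polynomial Matrix

/-- The auxiliary polynomial family. -/
noncomputable def pp (n m : ℕ) (i : Fin n) : Polynomial ℚ :=
  (∏ s ∈ Finset.Ico (i.val+1) n, (Polynomial.X + Polynomial.C (s:ℚ)))
    * (∏ t ∈ Finset.range i.val, (Polynomial.C (m:ℚ) - Polynomial.C (t:ℚ) - Polynomial.X))

lemma pp_deg (n m : ℕ) (i : Fin n) : (pp n m i).natDegree < n := by
  have h1 : (∏ s ∈ Finset.Ico (i.val+1) n, (Polynomial.X + Polynomial.C (s:ℚ))).natDegree
      ≤ n - (i.val+1) := by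
    refine le_trans (Polynomial.natDegree_prod_le _ _) ?_
    calc ∑ s ∈ Finset.Ico (i.val+1) n, (Polynomial.X + Polynomial.C (s:ℚ)).natDegree
        ≤ ∑ _s ∈ Finset.Ico (i.val+1) n, 1 := by
          refine Finset.sum_le_sum fun s _ => ?_
          exact le_of_eq (Polynomial.natDegree_X_add_C _)
      _ = n - (i.val+1) := by simp [Nat.card_Ico]
  have h2 : (∏ t ∈ Finset.range i.val,
      (Polynomial.C (m:ℚ) - Polynomial.C (t:ℚ) - Polynomial.X)).natDegree ≤ i.val := by
    refine le_trans (Polynomial.natDegree_prod_le _ _) ?_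
    calc ∑ t ∈ Finset.range i.val, (Polynomial.C (m:ℚ) - Polynomial.C (t:ℚ) - Polynomial.X).natDegree
        ≤ ∑ _t ∈ Finset.range i.val, 1 := by
          refine Finset.sum_le_sum fun t _ => ?_
          refine le_trans (Polynomial.natDegree_sub_le _ _) ?_
          simp [Polynomial.natDegree_sub_le]
          exact le_trans (Polynomial.natDegree_sub_le _ _) (by simp)
      _ = i.val := by simp
  have hi := i.isLt
  have h3 : (pp n m i).natDegree ≤ (n - (i.val+1)) + i.val := by
    unfold pp
    exact le_trans (Polynomial.natDegree_mul_le) (add_le_add h1 h2)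
  omega

lemma pp_eval (n m : ℕ) (i : Fin n) (x : ℚ) : (pp n m i).eval x =
    (∏ s ∈ Finset.Ico (i.val+1) n, (x + s)) * (∏ t ∈ Finset.range i.val, ((m:ℚ) - t - x)) := by
  simp [pp, Polynomial.eval_prod]

lemma asc (b c : ℕ) : (∏ u ∈ Finset.range c, ((b:ℚ) + 1 + u)) =
    ((b+c).factorial : ℚ) / (b.factorial : ℚ) := by
  induction c with
  | zero => simp [div_self (by positivity : (b.factorial : ℚ) ≠ 0)]
  | succ c ih =>
      rw [Finset.prod_range_succ, ih, show b + (c+1) = (b+c)+1 by ring, Nat.factorial_succ]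
      have : (b.factorial : ℚ) ≠ 0 := by positivity
      push_cast
      field_simp
      ring

lemma desc (B c : ℕ) (h : c ≤ B) : (∏ t ∈ Finset.range c, ((B:ℚ) - t)) =
    (B.factorial : ℚ) / ((B-c).factorial : ℚ) := by
  have hrefl := Finset.prod_range_reflect (fun t => (B:ℚ) - t) c
  rw [← hrefl]
  have e : ∀ t ∈ Finset.range c, ((B:ℚ) - (c - 1 - t : ℕ)) = ((B - c : ℕ) : ℚ) + 1 + t := by
    intro t ht
    rw [Finset.mem_range] at ht
    have h1 : (((c - 1 - t : ℕ)) : ℚ) = (c : ℚ) - 1 - t := by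
      push_cast [Nat.cast_sub (by omega : t ≤ c - 1), Nat.cast_sub (by omega : 1 ≤ c)]
      ring
    have h2 : (((B - c : ℕ)) : ℚ) = (B : ℚ) - c := by
      push_cast [Nat.cast_sub h]; ring
    rw [h1, h2]; ring
  rw [Finset.prod_congr rfl e, asc (B - c) c, Nat.sub_add_cancel h]

lemma pairs_to_Ioi {n : ℕ} {M : Type*} [CommMonoid M] (g : Fin n → Fin n → M) :
    (∏ p ∈ Finset.univ.filter (fun p : Fin n × Fin n => p.1 < p.2), g p.1 p.2)
      = ∏ i : Fin n, ∏ j ∈ Finset.Ioi i, g i j := by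
  rw [Finset.prod_filter, ← Finset.univ_product_univ, Finset.prod_product]
  refine Finset.prod_congr rfl fun i _ => ?_
  rw [← Finset.prod_filter]
  congr 1
  ext x; simp

lemma prod_Ioi_val {n : ℕ} (i : Fin n) (f : ℕ → ℚ) :
    (∏ j ∈ Finset.Ioi i, f j.val) = ∏ s ∈ Finset.Ico (i.val+1) n, f s := by
  have h1 : (∏ j ∈ Finset.Ioi i, f j.val)
      = ∏ s ∈ (Finset.Ioi i).map Fin.valEmbedding, f s := by
    rw [Finset.prod_map]; rfl
  rw [h1, Fin.map_valEmbedding_Ioi]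
  congr 1

lemma detG (n m : ℕ) (x : Fin n → ℚ) :
    Matrix.det (Matrix.of fun i j : Fin n => (pp n m i).eval (x j))
      = Matrix.det (Matrix.of fun i k : Fin n => (pp n m i).coeff k)
        * ∏ i : Fin n, ∏ j ∈ Finset.Ioi i, (x j - x i) := by
  have key : (Matrix.of fun i j : Fin n => (pp n m i).eval (x j))
      = (Matrix.of fun i k : Fin n => (pp n m i).coeff k) * (Matrix.vandermonde x)ᵀ := by
    ext i j
    rw [Matrix.mul_apply]
    simp only [Matrix.of_apply, Matrix.transpose_apply, Matrix.vandermonde_apply]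
    rw [Polynomial.eval_eq_sum_range' (pp_deg n m i), ← Fin.sum_univ_eq_sum_range]
  rw [key, Matrix.det_mul, Matrix.det_transpose, Matrix.det_vandermonde]

lemma detE (n m : ℕ) :
    Matrix.det (Matrix.of fun i j : Fin n => (pp n m i).eval (-(j.val:ℚ)))
      = ∏ i : Fin n, (((n-1-i.val).factorial : ℚ) * ((m+i.val).factorial / m.factorial)) := by
  rw [Matrix.det_of_lowerTriangular _ ?htri]
  case htri =>
    intro i j h
    have hij : i < j := h
    rw [Matrix.of_apply, pp_eval]
    apply mul_eq_zero_of_left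
    refine Finset.prod_eq_zero (i := j.val) ?_ ?_
    · simp only [Finset.mem_Ico]
      exact ⟨Fin.lt_def.mp hij, j.isLt⟩
    · ring
  refine Finset.prod_congr rfl fun i _ => ?_
  rw [Matrix.of_apply, pp_eval]
  have hi := i.isLt
  congr 1
  · rw [Finset.prod_Ico_eq_prod_range]
    have e : ∀ u ∈ Finset.range (n - (i.val+1)), (-(i.val:ℚ) + ((i.val+1+u : ℕ) : ℚ))
        = ((1:ℚ) + u) := by
      intro u _; push_cast; ring
    have hasc := asc 0 (n - (i.val+1))
    norm_num at hasc
    rw [Finset.prod_congr rfl e, hasc, show n - (i.val+1) = n - 1 - i.val by omega]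
  · have hrefl := Finset.prod_range_reflect (fun t => (m:ℚ) - t - (-(i.val:ℚ))) i.val
    rw [← hrefl]
    have e : ∀ t ∈ Finset.range i.val, ((m:ℚ) - ((i.val - 1 - t : ℕ):ℚ) - (-(i.val:ℚ)))
        = ((m:ℚ) + 1 + t) := by
      intro t ht
      rw [Finset.mem_range] at ht
      have h1 : (((i.val - 1 - t : ℕ)) : ℚ) = (i.val : ℚ) - 1 - t := by
        push_cast [Nat.cast_sub (by omega : t ≤ i.val - 1), Nat.cast_sub (by omega : 1 ≤ i.val)]
        ring
      rw [h1]; ring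
    rw [Finset.prod_congr rfl e, asc m i.val]

lemma entry_s7 (n m : ℕ) (a : ℤ) (ha1 : a ≤ (m:ℤ)) (ha2 : 0 ≤ a + n - 1) (i : Fin n) :
    ((ibin (m:ℤ) (a + i.val) : ℤ) : ℚ)
      = (m.factorial : ℚ) / (ifact (a + n - 1) * ifact ((m:ℤ) - a))
          * (pp n m i).eval ((a : ℚ)) := by
  have hi := i.isLt
  rw [pp_eval]
  by_cases h0 : 0 ≤ a + i.val
  · by_cases hm : a + i.val ≤ (m:ℤ)
    · rw [ibin, if_pos ⟨h0, hm⟩]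
      set k : ℕ := (a + i.val).toNat with hk
      have hkz : (k : ℤ) = a + i.val := Int.toNat_of_nonneg h0
      have hkm : k ≤ m := by omega
      have hAz : ((a + (n:ℤ) - 1).toNat : ℤ) = a + n - 1 := Int.toNat_of_nonneg ha2
      have hA : (a + (n:ℤ) - 1).toNat = k + (n - (i.val+1)) := by omega
      have hBz : (((m:ℤ) - a).toNat : ℤ) = (m:ℤ) - a := Int.toNat_of_nonneg (by omega)
      set B : ℕ := ((m:ℤ) - a).toNat with hB
      have hiB : i.val ≤ B := by omega
      have hP1 : (∏ s ∈ Finset.Ico (i.val+1) n, ((a:ℚ) + s))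
          = ((k + (n - (i.val+1))).factorial : ℚ) / (k.factorial : ℚ) := by
        rw [Finset.prod_Ico_eq_prod_range]
        have e : ∀ u ∈ Finset.range (n - (i.val+1)), ((a:ℚ) + ((i.val+1+u : ℕ) : ℚ))
            = ((k:ℚ) + 1 + u) := by
          intro u _
          have : (a:ℚ) = (k:ℚ) - i.val := by
            have : (a:ℚ) = ((a:ℤ):ℚ) := rfl
            rw [this, show (a:ℤ) = (k:ℤ) - i.val by omega]
            push_cast; ring
          rw [this]; push_cast; ring
        rw [Finset.prod_congr rfl e, asc k (n - (i.val+1))]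
      have hP2 : (∏ t ∈ Finset.range i.val, ((m:ℚ) - t - (a:ℚ)))
          = (B.factorial : ℚ) / ((B - i.val).factorial : ℚ) := by
        have e : ∀ t ∈ Finset.range i.val, ((m:ℚ) - t - (a:ℚ)) = ((B:ℚ) - t) := by
          intro t _
          have : ((B:ℤ):ℚ) = (m:ℚ) - (a:ℚ) := by
            rw [hBz]; push_cast; ring
          push_cast at this ⊢
          rw [this]; ring
        rw [Finset.prod_congr rfl e, desc B i.val hiB]
      rw [hP1, hP2]
      have hc : ((((m:ℤ)).toNat.choose ((a + i.val : ℤ)).toNat : ℕ) : ℚ)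
          = (m.factorial : ℚ) / ((k.factorial : ℚ) * ((m - k).factorial : ℚ)) := by
        rw [show ((m:ℤ)).toNat = m by omega, ← hk, Nat.cast_choose ℚ hkm]
      push_cast [hc]
      rw [ifact, ifact, hA, ← hB]
      have hBk : B - i.val = m - k := by omega
      rw [hBk]
      have n1 : (k.factorial : ℚ) ≠ 0 := by positivity
      have n2 : ((m - k).factorial : ℚ) ≠ 0 := by positivity
      have n3 : ((k + (n - (i.val+1))).factorial : ℚ) ≠ 0 := by positivity
      have n4 : (B.factorial : ℚ) ≠ 0 := by positivity
      field_simp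
      rw [show ((m:ℤ)).toNat = m by omega]
      exact_mod_cast Nat.choose_mul_factorial_mul_factorial hkm
    · rw [ibin, if_neg (by tauto)]
      have hBnn : (0:ℤ) ≤ (m:ℤ) - a := by omega
      set t0 : ℕ := ((m:ℤ) - a).toNat with ht0
      have ht0z : (t0 : ℤ) = (m:ℤ) - a := Int.toNat_of_nonneg hBnn
      have hmem : t0 ∈ Finset.range i.val := by
        rw [Finset.mem_range]; omega
      have : (∏ t ∈ Finset.range i.val, ((m:ℚ) - t - (a:ℚ))) = 0 := by
        refine Finset.prod_eq_zero hmem ?_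
        have : ((t0:ℤ):ℚ) = (m:ℚ) - (a:ℚ) := by rw [ht0z]; push_cast; ring
        push_cast at this ⊢
        rw [this]; ring
      rw [this]
      simp
  · rw [ibin, if_neg (by tauto)]
    set s0 : ℕ := (-a).toNat with hs0
    have hs0z : (s0 : ℤ) = -a := Int.toNat_of_nonneg (by omega)
    have hmem : s0 ∈ Finset.Ico (i.val+1) n := by
      rw [Finset.mem_Ico]; omega
    have : (∏ s ∈ Finset.Ico (i.val+1) n, ((a:ℚ) + s)) = 0 := by
      refine Finset.prod_eq_zero hmem ?_
      have : ((s0:ℤ):ℚ) = -(a:ℚ) := by rw [hs0z]; push_cast; ring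
      push_cast at this ⊢
      rw [this]; ring
    rw [this]
    simp

/-- **Lemma 2.2** in determinant form: for a strictly decreasing integer
sequence `l 0 > l 1 > ⋯ > l (n-1)` with `l 0 ≤ m` and `l (n-1) ≥ 1-n`,
the determinant `det (C(m, l_j + i - 1))` is given by a product formula. -/
theorem det_binomial (n m : ℕ) (hn : 1 ≤ n) (l : Fin n → ℤ)
    (hanti : StrictAnti l)
    (hfirst : l ⟨0, hn⟩ ≤ (m : ℤ))
    (hlast : 1 - (n : ℤ) ≤ l ⟨n - 1, Nat.sub_lt hn Nat.one_pos⟩) :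
    ((Matrix.det (Matrix.of fun i j : Fin n =>
        ibin (m : ℤ) (l j + (i.val : ℤ))) : ℤ) : ℚ)
    = ((∏ p ∈ Finset.univ.filter (fun p : Fin n × Fin n => p.1 < p.2),
          ((l p.1 - l p.2 : ℤ) : ℚ))
        * ∏ i : Fin n, (Nat.factorial (m + i.val) : ℚ))
      / ((∏ i : Fin n, ifact (l i + (n : ℤ) - 1))
        * ∏ i : Fin n, ifact ((m : ℤ) - l i)) := by
  -- bounds
  have hub : ∀ j : Fin n, l j ≤ (m:ℤ) := fun j =>
    le_trans (hanti.antitone (show (⟨0, hn⟩ : Fin n) ≤ j from by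
      simp [Fin.le_def])) hfirst
  have hlb : ∀ j : Fin n, 0 ≤ l j + n - 1 := by
    intro j
    have h := hanti.antitone (show j ≤ (⟨n - 1, Nat.sub_lt hn Nat.one_pos⟩ : Fin n) from by
      simp [Fin.le_def]; omega)
    omega
  -- notation
  set c : Fin n → ℚ := fun j => (m.factorial : ℚ) / (ifact (l j + n - 1) * ifact ((m:ℤ) - l j))
    with hcdef
  set Cd : ℚ := Matrix.det (Matrix.of fun i k : Fin n => (pp n m i).coeff k) with hCd
  set A : ℚ := ∏ i : Fin n, ∏ j ∈ Finset.Ioi i, ((l i : ℚ) - (l j : ℚ)) with hA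
  set Bv : ℚ := ∏ i : Fin n, ∏ j ∈ Finset.Ioi i, ((l j : ℚ) - (l i : ℚ)) with hBv
  set P : ℚ := ∏ i : Fin n, ∏ j ∈ Finset.Ioi i, ((j.val : ℚ) - (i.val : ℚ)) with hP
  set Q : ℚ := ∏ i : Fin n, ∏ j ∈ Finset.Ioi i, (-(j.val : ℚ) - -(i.val : ℚ)) with hQ
  set FM : ℚ := ∏ i : Fin n, (Nat.factorial (m + i.val) : ℚ) with hFM
  set D1 : ℚ := ∏ i : Fin n, ifact (l i + (n : ℤ) - 1) with hD1
  set D2 : ℚ := ∏ i : Fin n, ifact ((m : ℤ) - l i) with hD2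
  -- nonzeroness
  have hifact_pos : ∀ z : ℤ, 0 < ifact z := fun z => by
    rw [ifact]; positivity
  have hD1ne : D1 ≠ 0 := ne_of_gt (Finset.prod_pos fun i _ => hifact_pos _)
  have hD2ne : D2 ≠ 0 := ne_of_gt (Finset.prod_pos fun i _ => hifact_pos _)
  have hmfne : (m.factorial : ℚ) ≠ 0 := by positivity
  have hQne : Q ≠ 0 := by
    rw [hQ]
    refine Finset.prod_ne_zero_iff.mpr fun i _ => Finset.prod_ne_zero_iff.mpr fun j hj => ?_
    rw [Finset.mem_Ioi] at hj
    have : i.val < j.val := hj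
    intro hcon
    have : (i.val : ℚ) = j.val := by linarith
    exact absurd (by exact_mod_cast this) (Nat.ne_of_lt ‹i.val < j.val›)
  -- P is a product of factorials
  have hPval : P = ∏ i : Fin n, ((n - 1 - i.val).factorial : ℚ) := by
    rw [hP]
    refine Finset.prod_congr rfl fun i _ => ?_
    have hi := i.isLt
    rw [prod_Ioi_val i (fun s => (s:ℚ) - (i.val:ℚ)), Finset.prod_Ico_eq_prod_range]
    have e : ∀ u ∈ Finset.range (n - (i.val+1)), (((i.val+1+u : ℕ) : ℚ) - (i.val:ℚ))
        = ((1:ℚ) + u) := by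
      intro u _; push_cast; ring
    have hasc := asc 0 (n - (i.val+1))
    norm_num at hasc
    rw [Finset.prod_congr rfl e, hasc, show n - (i.val+1) = n - 1 - i.val by omega]
  have hPne : P ≠ 0 := by
    rw [hPval]
    exact ne_of_gt (Finset.prod_pos fun i _ => by positivity)
  -- step 1: cast the determinant
  have cast1 : ((Matrix.det (Matrix.of fun i j : Fin n =>
        ibin (m : ℤ) (l j + (i.val : ℤ))) : ℤ) : ℚ)
      = Matrix.det (Matrix.of fun i j : Fin n =>
          ((ibin (m:ℤ) (l j + (i.val : ℤ)) : ℤ) : ℚ)) := by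
    rw [show (((Matrix.det (Matrix.of fun i j : Fin n =>
        ibin (m : ℤ) (l j + (i.val : ℤ)))) : ℤ) : ℚ)
      = (Int.castRingHom ℚ) (Matrix.det (Matrix.of fun i j : Fin n =>
        ibin (m : ℤ) (l j + (i.val : ℤ)))) from rfl, RingHom.map_det]
    exact congrArg Matrix.det (by
      ext i j
      simp [RingHom.mapMatrix_apply, Matrix.map_apply])
  -- step 2: rewrite entries
  have e2 : (Matrix.of fun i j : Fin n => ((ibin (m:ℤ) (l j + (i.val : ℤ)) : ℤ) : ℚ))
      = Matrix.of fun i j : Fin n =>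
          c j * (Matrix.of fun i j : Fin n => (pp n m i).eval ((l j : ℚ))) i j := by
    ext i j
    simp only [Matrix.of_apply]
    exact entry_s7 n m (l j) (hub j) (hlb j) i
  -- step 3/4
  have step : ((Matrix.det (Matrix.of fun i j : Fin n =>
        ibin (m : ℤ) (l j + (i.val : ℤ))) : ℤ) : ℚ)
      = (∏ j : Fin n, c j) * (Cd * Bv) := by
    rw [cast1, e2, Matrix.det_mul_row, detG n m (fun j => ((l j : ℚ)))]
  -- step 5: determine Cd
  have hCQ : Cd * Q = P * (FM / (m.factorial : ℚ) ^ n) := by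
    have h1 := detG n m (fun j : Fin n => -(j.val : ℚ))
    have h2 := detE n m
    rw [h1, ← hCd, ← hQ] at h2
    rw [h2, Finset.prod_mul_distrib, ← hPval, Finset.prod_div_distrib,
      Finset.prod_const, Finset.card_univ, Fintype.card_fin]
  have hCdval : Cd = P * (FM / (m.factorial : ℚ) ^ n) / Q := by
    rw [eq_div_iff hQne]; exact hCQ
  -- pairing lemma  : Bv * P = A * Q
  have hBP : Bv * P = A * Q := by
    rw [hBv, hP, hA, hQ, ← Finset.prod_mul_distrib, ← Finset.prod_mul_distrib]
    refine Finset.prod_congr rfl fun i _ => ?_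
    rw [← Finset.prod_mul_distrib, ← Finset.prod_mul_distrib]
    refine Finset.prod_congr rfl fun j _ => ?_
    ring
  have hBvval : Bv = A * Q / P := by
    rw [eq_div_iff hPne]; exact hBP
  -- product of the c's
  have hcval : (∏ j : Fin n, c j) = (m.factorial : ℚ) ^ n / (D1 * D2) := by
    rw [hcdef]
    rw [Finset.prod_div_distrib, Finset.prod_const, Finset.card_univ, Fintype.card_fin,
      Finset.prod_mul_distrib]
  -- the target pairs product
  have hpairs : (∏ p ∈ Finset.univ.filter (fun p : Fin n × Fin n => p.1 < p.2),
      ((l p.1 - l p.2 : ℤ) : ℚ)) = A := by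
    rw [pairs_to_Ioi (fun i j => ((l i - l j : ℤ) : ℚ)), hA]
    refine Finset.prod_congr rfl fun i _ => Finset.prod_congr rfl fun j _ => ?_
    push_cast; ring
  rw [step, hpairs, hcval, hCdval, hBvval]
  field_simp
end

section
/- Let $a$, $b$, $c$ be integers with $1\le b\le a\le c$. Then $(-1)^{b(b+1)/2}\,P_b(a-2b-1,\,b+c+1)>0$. More precisely, for each $1\le j\le b$ every factor of the shifted factorial $(a-3b-c+2j-1)_j$ occurring in $P_b(a-2b-1,b+c+1)$ is negative (the largest such factor is $a-3b-c+3j-2\le a-c-2\le -2$), while all other factors of $P_b(a-2b-1,b+c+1)$ are positive, so the sign of $P_b(a-2b-1,b+c+1)$ is $(-1)^{b(b+1)/2}$. -/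
/-- The product side `P_n(x,y)` of the determinant evaluation (1.8). -/
def P (n : ℕ) (x y : ℤ) : ℚ :=
  ∏ j ∈ Finset.range n,
    ((Nat.factorial j : ℚ) * ifact (x + y + 2 * ((j : ℤ) + 1))
      * (poch (x - y + 2 * ((j : ℤ) + 1) + 1) (j + 1) : ℚ)
      * (poch (x + 2 * y + 3 * ((j : ℤ) + 1) + 1) (n - (j + 1)) : ℚ))
    / (ifact (x + (n : ℤ) + 2 * ((j : ℤ) + 1)) * ifact (y + (n : ℤ) - ((j : ℤ) + 1)))

lemma ifact_pos (m : ℤ) : 0 < ifact m := by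
  unfold ifact; exact_mod_cast m.toNat.factorial_pos

lemma poch_pos (a : ℤ) (ha : 0 < a) (k : ℕ) : 0 < poch a k :=
  Finset.prod_pos fun i _ => by have : (0:ℤ) ≤ (i:ℤ) := Int.ofNat_nonneg i; omega

lemma poch_neg_sign (a : ℤ) (k : ℕ) (h : ∀ i : ℕ, i < k → a + i < 0) :
    0 < (-1:ℤ)^k * poch a k := by
  have hE : ∏ i ∈ Finset.range k, (-(a+(i:ℤ))) = (-1:ℤ)^k * poch a k := by
    calc ∏ i ∈ Finset.range k, (-(a+(i:ℤ)))
        = ∏ i ∈ Finset.range k, ((-1) * (a+(i:ℤ))) := by simp [neg_one_mul]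
      _ = (∏ _i ∈ Finset.range k, (-1:ℤ)) * ∏ i ∈ Finset.range k, (a+(i:ℤ)) :=
          Finset.prod_mul_distrib
      _ = (-1:ℤ)^k * poch a k := by rw [Finset.prod_const, Finset.card_range, poch]
  rw [← hE]
  exact Finset.prod_pos fun i hi => by
    have := h i (Finset.mem_range.mp hi); omega

lemma sum_range_succ_eq (b : ℕ) : ∑ j ∈ Finset.range b, (j+1) = b*(b+1)/2 := by
  induction b with
  | zero => simp
  | succ n ih =>
    rw [Finset.sum_range_succ, ih]
    have h : (n+1)*((n+1)+1) = n*(n+1) + 2*(n+1) := by ring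
    omega

/-- For `1 ≤ b ≤ a ≤ c`, every factor of the shifted factorial
`(a-3b-c+2j-1)_j` occurring in `P_b(a-2b-1, b+c+1)` is negative
(the largest being `a-3b-c+3j-2 ≤ a-c-2 ≤ -2`), so the sign of
`P_b(a-2b-1, b+c+1)` is `(-1)^(b(b+1)/2)`; in particular
`(-1)^(b(b+1)/2) P_b(a-2b-1, b+c+1) > 0`. -/
theorem sign_P (a b c : ℕ) (hb : 1 ≤ b) (hba : b ≤ a) (hac : a ≤ c) :
    (∀ j k : ℕ, 1 ≤ j → j ≤ b → k < j →
        (a : ℤ) - 3 * b - c + 2 * j - 1 + k < 0)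
    ∧ (∀ j : ℕ, 1 ≤ j → j ≤ b →
        (a : ℤ) - 3 * b - c + 3 * j - 2 ≤ (a : ℤ) - c - 2 ∧ (a : ℤ) - c - 2 ≤ -2)
    ∧ 0 < (-1 : ℚ) ^ (b * (b + 1) / 2) * P b ((a : ℤ) - 2 * b - 1) ((b : ℤ) + c + 1) := by
  refine ⟨fun j k h1 h2 h3 => by omega, fun j h1 h2 => ⟨by omega, by omega⟩, ?_⟩
  unfold P
  set x : ℤ := (a : ℤ) - 2 * b - 1 with hx
  set y : ℤ := (b : ℤ) + c + 1 with hy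
  set f : ℕ → ℚ := fun j =>
    ((Nat.factorial j : ℚ) * ifact (x + y + 2 * ((j : ℤ) + 1))
      * (poch (x - y + 2 * ((j : ℤ) + 1) + 1) (j + 1) : ℚ)
      * (poch (x + 2 * y + 3 * ((j : ℤ) + 1) + 1) (b - (j + 1)) : ℚ))
    / (ifact (x + (b : ℤ) + 2 * ((j : ℤ) + 1)) * ifact (y + (b : ℤ) - ((j : ℤ) + 1)))
    with hf
  have key : ∀ j ∈ Finset.range b, 0 < (-1:ℚ)^(j+1) * f j := by
    intro j hj
    have hjb : j < b := Finset.mem_range.mp hj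
    have hC : 0 < (-1:ℚ)^(j+1) * ((poch (x - y + 2 * ((j : ℤ) + 1) + 1) (j + 1) : ℤ) : ℚ) := by
      have := poch_neg_sign (x - y + 2 * ((j : ℤ) + 1) + 1) (j+1)
        (fun i hi => by simp only [hx, hy]; omega)
      exact_mod_cast this
    have hD : (0:ℚ) < ((poch (x + 2 * y + 3 * ((j : ℤ) + 1) + 1) (b - (j + 1)) : ℤ) : ℚ) := by
      have := poch_pos (x + 2 * y + 3 * ((j : ℤ) + 1) + 1) (by simp only [hx, hy]; omega)
        (b - (j+1))
      exact_mod_cast this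
    have hA : (0:ℚ) < (Nat.factorial j : ℚ) := by exact_mod_cast j.factorial_pos
    have hnum : 0 < (-1:ℚ)^(j+1) * ((Nat.factorial j : ℚ) * ifact (x + y + 2 * ((j : ℤ) + 1))
        * (poch (x - y + 2 * ((j : ℤ) + 1) + 1) (j + 1) : ℚ)
        * (poch (x + 2 * y + 3 * ((j : ℤ) + 1) + 1) (b - (j + 1)) : ℚ)) := by
      have : (-1:ℚ)^(j+1) * ((Nat.factorial j : ℚ) * ifact (x + y + 2 * ((j : ℤ) + 1))
          * (poch (x - y + 2 * ((j : ℤ) + 1) + 1) (j + 1) : ℚ)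
          * (poch (x + 2 * y + 3 * ((j : ℤ) + 1) + 1) (b - (j + 1)) : ℚ))
          = (Nat.factorial j : ℚ) * ifact (x + y + 2 * ((j : ℤ) + 1))
          * ((-1:ℚ)^(j+1) * (poch (x - y + 2 * ((j : ℤ) + 1) + 1) (j + 1) : ℚ))
          * (poch (x + 2 * y + 3 * ((j : ℤ) + 1) + 1) (b - (j + 1)) : ℚ) := by ring
      rw [this]
      exact mul_pos (mul_pos (mul_pos hA (ifact_pos _)) hC) hD
    have hden : (0:ℚ) < ifact (x + (b : ℤ) + 2 * ((j : ℤ) + 1)) * ifact (y + (b : ℤ) - ((j : ℤ) + 1)) :=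
      mul_pos (ifact_pos _) (ifact_pos _)
    have : (-1:ℚ)^(j+1) * f j = ((-1:ℚ)^(j+1) * ((Nat.factorial j : ℚ) * ifact (x + y + 2 * ((j : ℤ) + 1))
        * (poch (x - y + 2 * ((j : ℤ) + 1) + 1) (j + 1) : ℚ)
        * (poch (x + 2 * y + 3 * ((j : ℤ) + 1) + 1) (b - (j + 1)) : ℚ)))
        / (ifact (x + (b : ℤ) + 2 * ((j : ℤ) + 1)) * ifact (y + (b : ℤ) - ((j : ℤ) + 1))) := by
      rw [hf]; ring
    rw [this]
    exact div_pos hnum hden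
  have hprod : 0 < ∏ j ∈ Finset.range b, ((-1:ℚ)^(j+1) * f j) := Finset.prod_pos key
  rw [Finset.prod_mul_distrib, Finset.prod_pow_eq_pow_sum, sum_range_succ_eq] at hprod
  exact hprod
end
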